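/- Let A = {1,…,k} with k ≥ 3 and n ≥ k+1, and let f : Aⁿ → {0,1} map a to 1 iff the multiset of entries of a is {1^{n-k+1}, 2, …, k} and the entries ≠ 1 appear in increasing order. Then there is no function f' : A* → {0,1} and permutation σ ∈ Sₙ with f(a) = f'(ofo(a∘σ)) for all a ∈ Aⁿ. -/

import Mathlib

/-- `ofo` maps a string to the subsequence retaining only the first occurrence of each symbol. -/
def ofo {A : Type*} [DecidableEq A] : List A → List A
  | [] => []
  | a :: l => a :: ofo (l.filter (· ≠ a))
termination_by l => l.length
decreasing_by
  simp only [List.length_cons]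
  exact Nat.lt_succ_of_le
    (List.length_unattach.trans_le ((List.length_filter_le _ _).trans List.length_attach.le))

/-- `goodTuple k n a` says the content of `a` consists of `n - (k+3) + 1` occurrences of `0`
together with exactly one occurrence of every other element of `Fin (k+3)`, and the entries
distinct from `0` appear in `a` in increasing order. (Here the alphabet `A = Fin (k+3)`
plays the role of `{1, …, k}` with `k ≥ 3`, the element `0` playing the role of `1`.) -/
def goodTuple (k n : ℕ) (a : Fin n → Fin (k+3)) : Prop :=
  (↑(List.ofFn a) : Multiset (Fin (k+3))) =
      Multiset.replicate (n - (k+3) + 1) 0 + ((Finset.univ : Finset (Fin (k+3))).erase 0).val ∧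
    List.Pairwise (· < ·) ((List.ofFn a).filter (· ≠ 0))

theorem ofo_append {A : Type*} [DecidableEq A] (x : A) :
    ∀ l : List A, x ∈ l → ofo (l ++ [x]) = ofo l
  | a :: l, h => by
    rw [List.cons_append, ofo, ofo, List.filter_append]
    rcases eq_or_ne x a with rfl | hx
    · simp
    · have hx' : x ∈ l := by
        rcases List.mem_cons.1 h with h | h
        · exact absurd h hx
        · exact h
      have : List.filter (· ≠ a) [x] = [x] := by simp [hx]
      rw [this]
      have hm : x ∈ l.filter (· ≠ a) := List.mem_filter.2 ⟨hx', by simp [hx]⟩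
      rw [ofo_append x (l.filter (· ≠ a)) hm]
termination_by l => l.length
decreasing_by
  simp only [List.length_cons]
  exact Nat.lt_succ_of_le (List.length_filter_le _ _)

theorem count_ofFn {n : ℕ} {A : Type*} [DecidableEq A] (f : Fin n → A) (v : A) :
    (↑(List.ofFn f) : Multiset A).count v
      = (Finset.univ.filter (fun i => f i = v)).card := by
  rw [List.ofFn_eq_map]
  have : (↑(List.map f (List.finRange n)) : Multiset A)
      = Multiset.map f (Finset.univ : Finset (Fin n)).val := by
    rw [Fin.univ_def]; rfl
  rw [this, Multiset.count_map]
  simp [Finset.card_filter, eq_comm, Finset.filter]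

def tupv (k : ℕ) (pv n jv : ℕ) : ℕ :=
  if jv = pv then 0
  else if (jv - if pv < jv then 1 else 0) < k+2
    then (jv - if pv < jv then 1 else 0) + 1
    else 0

theorem tupv_lt (k pv n jv : ℕ) : tupv k pv n jv < k + 3 := by
  unfold tupv; split_ifs <;> omega

def tup (k n : ℕ) (p : Fin n) : Fin n → Fin (k+3) := fun j =>
  ⟨tupv k p.val n j.val, tupv_lt _ _ _ _⟩

theorem tup_val (k n : ℕ) (p j : Fin n) : (tup k n p j).val = tupv k p.val n j.val := rfl

theorem tup_eq_iff (k n : ℕ) (p j : Fin n) (v : Fin (k+3)) :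
    tup k n p j = v ↔ tupv k p.val n j.val = v.val := by
  rw [Fin.ext_iff, tup_val]

theorem tup_count (k n : ℕ) (hn : k + 4 ≤ n) (p : Fin n) (v : Fin (k+3)) (hv : v ≠ 0) :
    Finset.filter (fun i => tup k n p i = v) Finset.univ
      = {⟨v.val - 1 + (if v.val - 1 < p.val then 0 else 1), by have := v.isLt; have := p.isLt; split <;> omega⟩} := by
  have hv0 : v.val ≠ 0 := fun h => hv (Fin.ext (by simp [h]))
  have hv2 := v.isLt
  have hp := p.isLt
  ext j
  have hj := j.isLt
  simp only [Finset.mem_filter, Finset.mem_univ, true_and, Finset.mem_singleton,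
    Fin.ext_iff, tup_val, tupv, Fin.val_zero]
  split_ifs <;> omega

theorem tup_ne_filter (k n : ℕ) (hn : k + 4 ≤ n) (p : Fin n) :
    Finset.filter (fun i => tup k n p i ≠ 0) Finset.univ
      = Finset.image (fun m : Fin (k+2) =>
          (⟨if m.val < p.val then m.val else m.val + 1, by have := m.isLt; have := p.isLt; split <;> omega⟩ : Fin n))
          Finset.univ := by
  have hp := p.isLt
  ext j
  have hj := j.isLt
  simp only [Finset.mem_filter, Finset.mem_univ, true_and, Finset.mem_image]
  constructor
  · intro h
    have h0 : tupv k p.val n j.val ≠ 0 := fun hh => h (Fin.ext (by simp [tup_val, hh]))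
    have h1 : ¬ j.val = p.val := by
      intro hh; exact h0 (by rw [tupv, if_pos hh])
    have hr : (j.val - if p.val < j.val then 1 else 0) < k + 2 := by
      by_contra hc
      exact h0 (by rw [tupv, if_neg h1, if_neg hc])
    refine ⟨⟨j.val - if p.val < j.val then 1 else 0, hr⟩, ?_⟩
    rw [Fin.ext_iff]
    simp only
    split_ifs <;> omega
  · rintro ⟨m, -, rfl⟩
    have hm := m.isLt
    intro hh
    rw [Fin.ext_iff, tup_val, tupv, Fin.val_zero] at hh
    simp only at hh
    split_ifs at hh <;> omega

theorem tup_card_ne (k n : ℕ) (hn : k + 4 ≤ n) (p : Fin n) :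
    (Finset.filter (fun i => tup k n p i ≠ 0) Finset.univ).card = k + 2 := by
  rw [tup_ne_filter k n hn p, Finset.card_image_of_injective, Finset.card_univ, Fintype.card_fin]
  intro a b hab
  rw [Fin.ext_iff] at hab ⊢
  simp only at hab
  have := a.isLt; have := b.isLt; have := p.isLt
  split_ifs at hab <;> omega

theorem tup_card_zero (k n : ℕ) (hn : k + 4 ≤ n) (p : Fin n) :
    (Finset.filter (fun i => tup k n p i = 0) Finset.univ).card = n - (k + 2) := by
  have h := Finset.card_filter_add_card_filter_not
    (s := (Finset.univ : Finset (Fin n))) (p := fun i => tup k n p i = 0)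
  rw [Finset.card_univ, Fintype.card_fin] at h
  have h2 := tup_card_ne k n hn p
  have : (Finset.filter (fun i => ¬ tup k n p i = 0) Finset.univ).card = k + 2 := by
    convert h2 using 2
  omega

theorem tup_ne_zero_elim {k n : ℕ} {p j : Fin n} (h : tup k n p j ≠ 0) :
    ¬ j.val = p.val ∧ (j.val - if p.val < j.val then 1 else 0) < k + 2 ∧
      (tup k n p j).val = (j.val - if p.val < j.val then 1 else 0) + 1 := by
  have h0 : tupv k p.val n j.val ≠ 0 := fun hh => h (Fin.ext (by simp [tup_val, hh]))
  have h1 : ¬ j.val = p.val := by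
    intro hh; exact h0 (by rw [tupv, if_pos hh])
  have hr : (j.val - if p.val < j.val then 1 else 0) < k + 2 := by
    by_contra hc
    exact h0 (by rw [tupv, if_neg h1, if_neg hc])
  exact ⟨h1, hr, by rw [tup_val, tupv, if_neg h1, if_pos hr]⟩

theorem tup_content (k n : ℕ) (hn : k + 4 ≤ n) (p : Fin n) :
    (↑(List.ofFn (tup k n p)) : Multiset (Fin (k+3))) =
      Multiset.replicate (n - (k+3) + 1) 0 +
        ((Finset.univ : Finset (Fin (k+3))).erase 0).val := by
  ext v
  rw [count_ofFn, Multiset.count_add, Multiset.count_replicate,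
    Multiset.count_eq_of_nodup ((Finset.univ.erase (0 : Fin (k+3))).nodup)]
  simp only [Finset.mem_val]
  by_cases hv : v = 0
  · subst hv
    rw [if_pos rfl, tup_card_zero k n hn p]
    have : (0 : Fin (k+3)) ∉ (Finset.univ : Finset (Fin (k+3))).erase 0 :=
      Finset.notMem_erase _ _
    rw [if_neg this]
    omega
  · rw [if_neg (fun h => hv h.symm), tup_count k n hn p v hv, Finset.card_singleton]
    have : v ∈ (Finset.univ : Finset (Fin (k+3))).erase 0 :=
      Finset.mem_erase.2 ⟨hv, Finset.mem_univ v⟩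
    rw [if_pos this]

theorem tup_sorted (k n : ℕ) (hn : k + 4 ≤ n) (p : Fin n) :
    List.Pairwise (· < ·) ((List.ofFn (tup k n p)).filter (· ≠ 0)) := by
  have hpw : (List.ofFn (tup k n p)).Pairwise
      (fun x y => x ≠ 0 → y ≠ 0 → x < y) := by
    rw [List.pairwise_ofFn]
    intro i j hij hi0 hj0
    obtain ⟨h1i, hri, hvi⟩ := tup_ne_zero_elim hi0
    obtain ⟨h1j, hrj, hvj⟩ := tup_ne_zero_elim hj0
    rw [Fin.lt_def, hvi, hvj]
    rw [Fin.lt_def] at hij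
    split_ifs at hri hrj ⊢ <;> omega
  have hf := hpw.filter (fun x => decide (x ≠ 0))
  refine List.Pairwise.imp_of_mem ?_ hf
  intro a b ha hb hab
  exact hab (by simpa using (List.mem_filter.1 ha).2) (by simpa using (List.mem_filter.1 hb).2)

theorem tup_good (k n : ℕ) (hn : k + 4 ≤ n) (p : Fin n) : goodTuple k n (tup k n p) :=
  ⟨tup_content k n hn p, tup_sorted k n hn p⟩

theorem one_val (k : ℕ) : (1 : Fin (k+3)).val = 1 := Fin.val_one (k+1)

theorem finOneNeZero (k : ℕ) : (1 : Fin (k+3)) ≠ 0 := by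
  intro h
  have := congrArg Fin.val h
  rw [one_val, Fin.val_zero] at this
  exact one_ne_zero this

/-- the unique index where `tup k n p` takes value `1` -/
def jone (k n : ℕ) (hn : k + 4 ≤ n) (p : Fin n) : Fin n :=
  ⟨if 0 < p.val then 0 else 1, by split <;> omega⟩

theorem jone_ne (k n : ℕ) (hn : k + 4 ≤ n) (p : Fin n) : jone k n hn p ≠ p := by
  intro hh
  have h := congrArg Fin.val hh
  rw [jone] at h
  simp only at h
  split at h <;> omega

theorem tup_jone (k n : ℕ) (hn : k + 4 ≤ n) (p : Fin n) : tup k n p (jone k n hn p) = 1 := by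
  rw [Fin.ext_iff, tup_val, one_val, tupv, jone]
  simp only
  have hj := (jone k n hn p).isLt
  split_ifs <;> omega

theorem bad_not_good (k n : ℕ) (hn : k + 4 ≤ n) (p : Fin n) :
    ¬ goodTuple k n (Function.update (tup k n p) p 1) := by
  intro h
  obtain ⟨hc, -⟩ := h
  have h1 : ((↑(List.ofFn (Function.update (tup k n p) p 1)) : Multiset (Fin (k+3)))).count 1 = 1 := by
    rw [hc, Multiset.count_add, Multiset.count_replicate,
      Multiset.count_eq_of_nodup ((Finset.univ.erase (0 : Fin (k+3))).nodup)]
    simp only [Finset.mem_val]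
    rw [if_neg (fun hh => finOneNeZero k hh.symm),
      if_pos (Finset.mem_erase.2 ⟨finOneNeZero k, Finset.mem_univ _⟩)]
  rw [count_ofFn] at h1
  have hbp : Function.update (tup k n p) p 1 p = 1 := Function.update_self _ _ _
  have hbj1 : Function.update (tup k n p) p 1 (jone k n hn p) = 1 := by
    rw [Function.update_of_ne (jone_ne k n hn p)]
    exact tup_jone k n hn p
  have hsub : ({p, jone k n hn p} : Finset (Fin n)) ⊆
      Finset.filter (fun i => Function.update (tup k n p) p 1 i = 1) Finset.univ := by
    intro x hx
    rcases Finset.mem_insert.1 hx with rfl | hx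
    · exact Finset.mem_filter.2 ⟨Finset.mem_univ _, hbp⟩
    · rw [Finset.mem_singleton] at hx
      subst hx
      exact Finset.mem_filter.2 ⟨Finset.mem_univ _, hbj1⟩
  have hcard := Finset.card_le_card hsub
  rw [Finset.card_pair (Ne.symm (jone_ne k n hn p))] at hcard
  omega

theorem tup_self (k n : ℕ) (p : Fin n) : tup k n p p = 0 := by
  apply Fin.ext
  rw [tup_val, tupv, if_pos rfl, Fin.val_zero]

/-- an index distinct from `p` where `tup k n p` takes value `0` -/
def jzero (k n : ℕ) (hn : k + 4 ≤ n) (p : Fin n) : Fin n :=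
  ⟨if p.val = k+3 then k+2 else k+3, by split <;> omega⟩

theorem jzero_ne (k n : ℕ) (hn : k + 4 ≤ n) (p : Fin n) : jzero k n hn p ≠ p := by
  intro hh
  have h := congrArg Fin.val hh
  rw [jzero] at h
  simp only at h
  split at h <;> omega

theorem tup_jzero (k n : ℕ) (hn : k + 4 ≤ n) (p : Fin n) : tup k n p (jzero k n hn p) = 0 := by
  have hne := jzero_ne k n hn p
  apply Fin.ext
  rw [tup_val, tupv, Fin.val_zero, jzero]
  simp only
  have : ¬ (jzero k n hn p).val = p.val := fun hh => hne (Fin.ext hh)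
  rw [jzero] at this
  simp only at this
  split_ifs <;> omega

/-- for `|A| = k + 3 ≥ 3` and `n ≥ (k+3) + 1`, the `{0,1}`-valued function `f`
taking value `1` exactly on the good tuples is not similar to any function determined by the
order of first occurrence: there are no `f' : A* → {0,1}` and `σ ∈ Sₙ` with
`f(a) = f'(ofo(a ∘ σ))` for all `a ∈ Aⁿ`. -/
theorem stmt11 (k n : ℕ) (hn : k + 4 ≤ n) (f : (Fin n → Fin (k+3)) → Fin 2)
    (hf : ∀ a : Fin n → Fin (k+3),
      (goodTuple k n a → f a = 1) ∧ (¬ goodTuple k n a → f a = 0)) :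
    ¬ ∃ (f' : List (Fin (k+3)) → Fin 2) (σ : Equiv.Perm (Fin n)),
        ∀ a : Fin n → Fin (k+3), f a = f' (ofo (List.ofFn (a ∘ ⇑σ))) := by
  rintro ⟨f', σ, hsim⟩
  obtain ⟨m, rfl⟩ : ∃ m, n = m + 1 := ⟨n - 1, by omega⟩
  set p := σ (Fin.last m) with hp
  set a := tup k (m+1) p with hadef
  set b := Function.update a p 1 with hbdef
  have ha : f a = 1 := (hf a).1 (tup_good k (m+1) hn p)
  have hb : f b = 0 := (hf b).2 (bad_not_good k (m+1) hn p)
  have key : ofo (List.ofFn (a ∘ ⇑σ)) = ofo (List.ofFn (b ∘ ⇑σ)) := by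
    rw [List.ofFn_succ' (a ∘ ⇑σ), List.ofFn_succ' (b ∘ ⇑σ)]
    have hL : (List.ofFn fun i : Fin m => (b ∘ ⇑σ) i.castSucc)
        = (List.ofFn fun i : Fin m => (a ∘ ⇑σ) i.castSucc) := by
      apply congrArg
      funext i
      show b (σ i.castSucc) = a (σ i.castSucc)
      rw [hbdef, Function.update_of_ne]
      intro hh
      exact absurd (σ.injective hh) (Fin.ne_last_of_lt (Fin.castSucc_lt_last i))
    rw [hL, List.concat_eq_append, List.concat_eq_append]
    have hlast_a : (a ∘ ⇑σ) (Fin.last m) = 0 := tup_self k (m+1) p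
    have hlast_b : (b ∘ ⇑σ) (Fin.last m) = 1 := Function.update_self _ _ _
    rw [hlast_a, hlast_b]
    have hmem : ∀ (j : Fin (m+1)), j ≠ p →
        a j ∈ List.ofFn (fun i : Fin m => (a ∘ ⇑σ) i.castSucc) := by
      intro j hj
      rw [List.mem_ofFn]
      have hne : σ.symm j ≠ Fin.last m := by
        intro hh
        exact hj (by rw [← σ.apply_symm_apply j, hh, ← hp])
      obtain ⟨i, hi⟩ := Fin.exists_castSucc_eq.2 hne
      exact ⟨i, by simp [hi]⟩
    have h0 : (0 : Fin (k+3)) ∈ List.ofFn (fun i : Fin m => (a ∘ ⇑σ) i.castSucc) := by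
      have := hmem (jzero k (m+1) hn p) (jzero_ne k (m+1) hn p)
      rwa [hadef, tup_jzero k (m+1) hn p] at this
    have h1 : (1 : Fin (k+3)) ∈ List.ofFn (fun i : Fin m => (a ∘ ⇑σ) i.castSucc) := by
      have := hmem (jone k (m+1) hn p) (jone_ne k (m+1) hn p)
      rwa [hadef, tup_jone k (m+1) hn p] at this
    rw [ofo_append _ _ h0, ofo_append _ _ h1]
  have := hsim a
  rw [key, ← hsim b, hb] at this
  rw [ha] at this
  exact absurd this (by decide)
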